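/- Let Z be a real random variable with Lebesgue density f satisfying f(y) ≤ M(y)·P(max_j X_j ≥ y) for all y, where M is the standard Gaussian Mills ratio and X ~ N(0,Σ) in ℝ^p with unit variance components. Then for all y ∈ ℝ and ε > 0, P(Z ∈ [y, y+ε]) ≤ 2ε(1 + E[‖X‖_∞]). -/

import Mathlib

open MeasureTheory ProbabilityTheory

/-- The standard Gaussian Mills ratio `M(y) = φ(y) / ∫_y^∞ φ(t) dt`. -/
noncomputable def millsRatio (y : ℝ) : ℝ :=
  gaussianPDFReal 0 1 y / ∫ t in Set.Ioi y, gaussianPDFReal 0 1 t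

/-- `μ` is the law of a centered jointly Gaussian random vector in `ℝ^p`. -/
def IsCenteredGaussianLaw {p : ℕ} (μ : Measure (Fin p → ℝ)) : Prop :=
  ∀ c : Fin p → ℝ, ∃ v : NNReal,
    μ.map (fun x => ∑ j, c j * x j) = gaussianReal 0 v

open Real

lemma gaussianPDFReal_zero_one (x : ℝ) :
    gaussianPDFReal 0 1 x = (√(2 * π))⁻¹ * rexp (-x ^ 2 / 2) := by
  simp [gaussianPDFReal]

lemma gp_pointwise (t s : ℝ) :
    gaussianPDFReal 0 1 t * (1 - (s ^ 2 - t ^ 2) / 2) ≤ gaussianPDFReal 0 1 s := by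
  rw [gaussianPDFReal_zero_one, gaussianPDFReal_zero_one]
  have h1 : 1 - (s ^ 2 - t ^ 2) / 2 ≤ rexp (-(s ^ 2 - t ^ 2) / 2) := by
    have := Real.add_one_le_exp (-(s ^ 2 - t ^ 2) / 2); linarith
  have h2 : rexp (-t ^ 2 / 2) * rexp (-(s ^ 2 - t ^ 2) / 2) = rexp (-s ^ 2 / 2) := by
    rw [← Real.exp_add]; congr 1; ring
  calc (√(2 * π))⁻¹ * rexp (-t ^ 2 / 2) * (1 - (s ^ 2 - t ^ 2) / 2)
      ≤ (√(2 * π))⁻¹ * rexp (-t ^ 2 / 2) * rexp (-(s ^ 2 - t ^ 2) / 2) :=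
        mul_le_mul_of_nonneg_left h1 (by positivity)
    _ = (√(2 * π))⁻¹ * rexp (-s ^ 2 / 2) := by rw [mul_assoc, h2]

lemma denom_lb {t : ℝ} (ht : 0 ≤ t) :
    gaussianPDFReal 0 1 t * ((t + 1)⁻¹ / 2) ≤ ∫ s in Set.Ioi t, gaussianPDFReal 0 1 s := by
  have ht1 : (0:ℝ) < t + 1 := by linarith
  set h : ℝ := (t + 1)⁻¹ with hdef
  have hh : 0 < h := inv_pos.mpr ht1
  have hh1 : h ≤ 1 := by rw [hdef]; exact inv_le_one_of_one_le₀ (by linarith)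
  have hth : t * h = 1 - h := by rw [hdef]; field_simp; ring
  have hle : t ≤ t + h := by linarith
  have int2 : IntervalIntegrable (gaussianPDFReal 0 1) volume t (t + h) :=
    (integrable_gaussianPDFReal 0 1).intervalIntegrable
  have int1 : IntervalIntegrable
      (fun s => gaussianPDFReal 0 1 t * (1 - (s ^ 2 - t ^ 2) / 2)) volume t (t + h) :=
    (Continuous.intervalIntegrable (by continuity) _ _)
  have key1 : ∫ s in t..(t + h), gaussianPDFReal 0 1 t * (1 - (s ^ 2 - t ^ 2) / 2)
      ≤ ∫ s in t..(t + h), gaussianPDFReal 0 1 s :=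
    intervalIntegral.integral_mono_on hle int1 int2 (fun s _ => gp_pointwise t s)
  have hF : ∀ s ∈ Set.uIcc t (t + h),
      HasDerivAt (fun s => s + t ^ 2 * s / 2 - s ^ 3 / 6) (1 - (s ^ 2 - t ^ 2) / 2) s := by
    intro s _
    have : HasDerivAt (fun s : ℝ => s + t ^ 2 * s / 2 - s ^ 3 / 6)
        (1 + t ^ 2 * 1 / 2 - ((3 : ℕ) * s ^ (3 - 1)) / 6) s :=
      ((hasDerivAt_id s).add (((hasDerivAt_id s).const_mul (t ^ 2)).div_const 2)).sub
        ((hasDerivAt_pow 3 s).div_const 6)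
    convert this using 1
    push_cast; ring
  have hpoly : IntervalIntegrable (fun s : ℝ => 1 - (s ^ 2 - t ^ 2) / 2) volume t (t + h) :=
    Continuous.intervalIntegrable (by continuity) _ _
  have key2 : ∫ s in t..(t + h), (1 - (s ^ 2 - t ^ 2) / 2) =
      ((t + h) + t ^ 2 * (t + h) / 2 - (t + h) ^ 3 / 6) - (t + t ^ 2 * t / 2 - t ^ 3 / 6) :=
    intervalIntegral.integral_eq_sub_of_hasDerivAt hF hpoly
  have key3 : h / 2 ≤ ∫ s in t..(t + h), (1 - (s ^ 2 - t ^ 2) / 2) := by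
    rw [key2]
    nlinarith [sq_nonneg h, hh.le, mul_pos hh hh]
  have key4 : ∫ s in t..(t + h), gaussianPDFReal 0 1 s
      ≤ ∫ s in Set.Ioi t, gaussianPDFReal 0 1 s := by
    rw [intervalIntegral.integral_of_le hle]
    exact setIntegral_mono_set (integrable_gaussianPDFReal 0 1).integrableOn
      (Filter.Eventually.of_forall fun s => gaussianPDFReal_nonneg 0 1 s)
      (HasSubset.Subset.eventuallyLE Set.Ioc_subset_Ioi_self)
  have key5 : gaussianPDFReal 0 1 t * (h / 2)
      ≤ ∫ s in t..(t + h), gaussianPDFReal 0 1 t * (1 - (s ^ 2 - t ^ 2) / 2) := by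
    rw [intervalIntegral.integral_const_mul]
    exact mul_le_mul_of_nonneg_left key3 (gaussianPDFReal_nonneg 0 1 t)
  calc gaussianPDFReal 0 1 t * (h / 2)
      ≤ ∫ s in t..(t + h), gaussianPDFReal 0 1 t * (1 - (s ^ 2 - t ^ 2) / 2) := key5
    _ ≤ ∫ s in t..(t + h), gaussianPDFReal 0 1 s := key1
    _ ≤ _ := key4

lemma millsRatio_nonneg (t : ℝ) : 0 ≤ millsRatio t :=
  div_nonneg (gaussianPDFReal_nonneg 0 1 t)
    (integral_nonneg fun s => gaussianPDFReal_nonneg 0 1 s)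

lemma millsRatio_le_of_nonneg {t : ℝ} (ht : 0 ≤ t) : millsRatio t ≤ 2 * (t + 1) := by
  have ht1 : (0:ℝ) < t + 1 := by linarith
  have hφ : 0 < gaussianPDFReal 0 1 t := gaussianPDFReal_pos 0 1 t one_ne_zero
  have hlb := denom_lb ht
  have hD : 0 < ∫ s in Set.Ioi t, gaussianPDFReal 0 1 s :=
    lt_of_lt_of_le (by positivity) hlb
  rw [millsRatio, div_le_iff₀ hD]
  have : 2 * (t + 1) * (gaussianPDFReal 0 1 t * ((t + 1)⁻¹ / 2)) = gaussianPDFReal 0 1 t := by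
    field_simp
  nlinarith [mul_le_mul_of_nonneg_left hlb (by positivity : (0:ℝ) ≤ 2 * (t + 1))]

lemma exp_half_le_two : rexp (1 / 2 : ℝ) ≤ 2 := by
  nlinarith [Real.exp_one_lt_d9, Real.exp_pos (1 / 2 : ℝ),
    (Real.exp_add (1/2 : ℝ) (1/2)).symm]

lemma millsRatio_le_of_neg {t : ℝ} (ht : t < 0) : millsRatio t ≤ 2 := by
  have hφ1 : 0 < gaussianPDFReal 0 1 1 := gaussianPDFReal_pos 0 1 1 one_ne_zero
  have key4 : ∫ s in Set.Ioc (0:ℝ) 1, gaussianPDFReal 0 1 s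
      ≤ ∫ s in Set.Ioi t, gaussianPDFReal 0 1 s := by
    refine setIntegral_mono_set (integrable_gaussianPDFReal 0 1).integrableOn
      (Filter.Eventually.of_forall fun s => gaussianPDFReal_nonneg 0 1 s)
      (HasSubset.Subset.eventuallyLE ?_)
    intro s hs
    exact lt_trans ht hs.1
  have key5 : gaussianPDFReal 0 1 1 ≤ ∫ s in Set.Ioc (0:ℝ) 1, gaussianPDFReal 0 1 s := by
    have hmono : ∀ s ∈ Set.Ioc (0:ℝ) 1, gaussianPDFReal 0 1 1 ≤ gaussianPDFReal 0 1 s := by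
      intro s hs
      rw [gaussianPDFReal_zero_one, gaussianPDFReal_zero_one]
      have hs1 : s ^ 2 ≤ 1 := by nlinarith [hs.1, hs.2]
      have : rexp (-(1:ℝ) ^ 2 / 2) ≤ rexp (-s ^ 2 / 2) := by
        apply Real.exp_le_exp.mpr; nlinarith
      nlinarith [inv_nonneg.mpr (Real.sqrt_nonneg (2 * π))]
    have h := setIntegral_mono_on (f := fun _ : ℝ => gaussianPDFReal 0 1 1)
      (g := gaussianPDFReal 0 1) (s := Set.Ioc (0:ℝ) 1)
      ((integrableOn_const_iff).mpr (Or.inr (by simp)))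
      ((integrable_gaussianPDFReal 0 1).integrableOn) measurableSet_Ioc hmono
    simpa using h
  have hD : 0 < ∫ s in Set.Ioi t, gaussianPDFReal 0 1 s := lt_of_lt_of_le hφ1 (key5.trans key4)
  rw [millsRatio, div_le_iff₀ hD]
  have hnum : gaussianPDFReal 0 1 t ≤ (√(2 * π))⁻¹ := by
    rw [gaussianPDFReal_zero_one]
    have : rexp (-t ^ 2 / 2) ≤ 1 := Real.exp_le_one_iff.mpr (by nlinarith [sq_nonneg t])
    nlinarith [inv_nonneg.mpr (Real.sqrt_nonneg (2 * π))]
  have h2 : (√(2 * π))⁻¹ ≤ 2 * gaussianPDFReal 0 1 1 := by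
    rw [gaussianPDFReal_zero_one]
    have hx := exp_half_le_two
    have hxp : 0 < rexp (1 / 2 : ℝ) := Real.exp_pos _
    have hmul : rexp (-(1:ℝ) ^ 2 / 2) * rexp (1 / 2 : ℝ) = 1 := by
      rw [← Real.exp_add]; norm_num
    have hsq : 0 < (√(2 * π))⁻¹ := by
      have h2pi : 0 < √(2 * π) := Real.sqrt_pos.mpr (by positivity)
      positivity
    nlinarith [Real.exp_pos (-(1:ℝ) ^ 2 / 2), mul_pos hsq hxp]
  calc gaussianPDFReal 0 1 t ≤ (√(2 * π))⁻¹ := hnum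
    _ ≤ 2 * gaussianPDFReal 0 1 1 := h2
    _ ≤ 2 * ∫ s in Set.Ioi t, gaussianPDFReal 0 1 s := by
        nlinarith [key5.trans key4]

lemma integrable_id_gaussianReal : Integrable (fun x : ℝ => x) (gaussianReal 0 1) := by
  rw [gaussianReal_of_var_ne_zero 0 one_ne_zero]
  rw [integrable_withDensity_iff (measurable_gaussianPDF 0 1)
    (Filter.Eventually.of_forall fun x => ENNReal.ofReal_lt_top)]
  have : (fun x : ℝ => x * ((gaussianPDF 0 1 x).toReal))
      = fun x : ℝ => ((√(2 * π))⁻¹) * (x ^ (1:ℝ) * rexp (-(2⁻¹ : ℝ) * x ^ 2)) := by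
    ext x
    rw [gaussianPDF, ENNReal.toReal_ofReal (gaussianPDFReal_nonneg 0 1 x)]
    rw [gaussianPDFReal]
    push_cast
    rw [Real.rpow_one]
    ring_nf
  rw [this]
  exact (integrable_rpow_mul_exp_neg_mul_sq (by norm_num) (by norm_num)).const_mul _

lemma integrable_norm_pi {p : ℕ} (μ : Measure (Fin p → ℝ))
    [IsProbabilityMeasure μ]
    (hvar : ∀ j : Fin p, μ.map (fun x => x j) = gaussianReal 0 1) :
    Integrable (fun x : Fin p → ℝ => ‖x‖) μ := by
  have hcoord : ∀ j : Fin p, Integrable (fun x : Fin p → ℝ => x j) μ := by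
    intro j
    have hm : AEMeasurable (fun x : Fin p → ℝ => x j) μ := (measurable_pi_apply j).aemeasurable
    have := (integrable_map_measure (μ := μ) (f := fun x : Fin p → ℝ => x j)
      (g := fun x : ℝ => x) aestronglyMeasurable_id hm).mp
    rw [hvar j] at this
    exact this integrable_id_gaussianReal
  have hsum : Integrable (fun x : Fin p → ℝ => ∑ j, |x j|) μ :=
    integrable_finset_sum _ fun j _ => (hcoord j).abs
  refine hsum.mono' ?_ ?_
  · exact (continuous_norm.measurable.comp measurable_id).aestronglyMeasurable
  · refine Filter.Eventually.of_forall fun x => ?_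
    rw [Real.norm_eq_abs, abs_of_nonneg (norm_nonneg x)]
    refine (pi_norm_le_iff_of_nonneg (Finset.sum_nonneg fun j _ => abs_nonneg _)).mpr fun j => ?_
    rw [Real.norm_eq_abs]
    exact Finset.single_le_sum (fun i _ => abs_nonneg (x i)) (Finset.mem_univ j)

lemma millsRatio_mul_le {p : ℕ} (hp : 0 < p) (μ : Measure (Fin p → ℝ))
    [IsProbabilityMeasure μ]
    (hvar : ∀ j : Fin p, μ.map (fun x => x j) = gaussianReal 0 1) (t : ℝ) :
    millsRatio t * (μ {x | t ≤ ⨆ j, x j}).toReal ≤ 2 * (1 + ∫ x, ‖x‖ ∂μ) := by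
  have hI : 0 ≤ ∫ x, ‖x‖ ∂μ := integral_nonneg fun x => norm_nonneg x
  have hnn : 0 ≤ (μ {x | t ≤ ⨆ j, x j}).toReal := ENNReal.toReal_nonneg
  have hPtr : (μ {x | t ≤ ⨆ j, x j}).toReal ≤ 1 := by
    refine ENNReal.toReal_le_of_le_ofReal one_pos.le ?_
    simpa using prob_le_one (μ := μ) (s := {x | t ≤ ⨆ j, x j})
  rcases lt_or_ge t 0 with ht | ht
  · have := mul_le_mul (millsRatio_le_of_neg ht) hPtr hnn (by norm_num)
    linarith
  · haveI : Nonempty (Fin p) := Fin.pos_iff_nonempty.mp hp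
    have hsub : {x : Fin p → ℝ | t ≤ ⨆ j, x j} ⊆ {x : Fin p → ℝ | t ≤ ‖x‖} := by
      intro x hx
      refine le_trans hx (ciSup_le fun j => (le_abs_self (x j)).trans ?_)
      simpa [Real.norm_eq_abs] using norm_le_pi_norm x j
    have hmono : (μ {x | t ≤ ⨆ j, x j}).toReal ≤ (μ {x | t ≤ ‖x‖}).toReal :=
      ENNReal.toReal_mono (measure_ne_top μ _) (measure_mono hsub)
    have hmarkov : t * (μ {x : Fin p → ℝ | t ≤ ‖x‖}).toReal ≤ ∫ x, ‖x‖ ∂μ :=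
      mul_meas_ge_le_integral_of_nonneg
        (Filter.Eventually.of_forall fun x => norm_nonneg x)
        (integrable_norm_pi μ hvar) t
    have h1 : t * (μ {x | t ≤ ⨆ j, x j}).toReal ≤ ∫ x, ‖x‖ ∂μ :=
      le_trans (mul_le_mul_of_nonneg_left hmono ht) hmarkov
    have h2 : millsRatio t * (μ {x | t ≤ ⨆ j, x j}).toReal
        ≤ 2 * (t + 1) * (μ {x | t ≤ ⨆ j, x j}).toReal :=
      mul_le_mul_of_nonneg_right (millsRatio_le_of_nonneg ht) hnn
    nlinarith

/-- If a real random variable `Z` has a Lebesgue density `f` dominated as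
`f(y) ≤ M(y) · P(max_j X_j ≥ y)` with `X ~ N(0,Σ)` in `ℝ^p` with unit variance
components, then `P(Z ∈ [y, y+ε]) ≤ 2ε(1 + E[‖X‖_∞])` for all `y` and `ε > 0`. -/
theorem anticoncentration_of_millsRatio_bound
    {Ω : Type*} [MeasurableSpace Ω] (P : Measure Ω) [IsProbabilityMeasure P]
    (Z : Ω → ℝ) (hZ : Measurable Z)
    {p : ℕ} (hp : 0 < p) (μ : Measure (Fin p → ℝ)) [IsProbabilityMeasure μ]
    (hGauss : IsCenteredGaussianLaw μ)
    (hvar : ∀ j : Fin p, μ.map (fun x => x j) = gaussianReal 0 1)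
    (f : ℝ → ℝ)
    (hdens : P.map Z = volume.withDensity (fun y => ENNReal.ofReal (f y)))
    (hfle : ∀ y : ℝ, f y ≤ millsRatio y * (μ {x | y ≤ ⨆ j, x j}).toReal) :
    ∀ (y ε : ℝ), 0 < ε →
      P {ω | Z ω ∈ Set.Icc y (y + ε)} ≤
        ENNReal.ofReal (2 * ε * (1 + ∫ x, ‖x‖ ∂μ)) := by
  intro y ε hε
  have hI : 0 ≤ ∫ x, ‖x‖ ∂μ := integral_nonneg fun x => norm_nonneg x
  have hC : 0 ≤ 2 * (1 + ∫ x, ‖x‖ ∂μ) := by linarith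
  have hfC : ∀ t : ℝ, f t ≤ 2 * (1 + ∫ x, ‖x‖ ∂μ) := fun t =>
    (hfle t).trans (millsRatio_mul_le hp μ hvar t)
  have hset : {ω | Z ω ∈ Set.Icc y (y + ε)} = Z ⁻¹' Set.Icc y (y + ε) := rfl
  rw [hset, ← Measure.map_apply hZ measurableSet_Icc, hdens,
    withDensity_apply _ measurableSet_Icc]
  calc ∫⁻ t in Set.Icc y (y + ε), ENNReal.ofReal (f t)
      ≤ ∫⁻ _ in Set.Icc y (y + ε), ENNReal.ofReal (2 * (1 + ∫ x, ‖x‖ ∂μ)) :=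
        lintegral_mono fun t => ENNReal.ofReal_le_ofReal (hfC t)
    _ = ENNReal.ofReal (2 * (1 + ∫ x, ‖x‖ ∂μ)) * volume (Set.Icc y (y + ε)) :=
        setLIntegral_const _ _
    _ = ENNReal.ofReal (2 * (1 + ∫ x, ‖x‖ ∂μ)) * ENNReal.ofReal ε := by
        rw [Real.volume_Icc]; congr 1; ring
    _ = ENNReal.ofReal (2 * ε * (1 + ∫ x, ‖x‖ ∂μ)) := by
        rw [← ENNReal.ofReal_mul hC]; congr 1; ring
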